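/- Suppose at convergence the perceptron with dynamic margin with accuracy 0 < ε < 1 has weight vector a (after t_c > 0 updates) such that every pattern y_k satisfies a·y_k > (1−ε)‖a‖²/t_c, and γ_d = max over unit vectors u' of min_k u'·y_k > 0. Then the achieved directional margin γ'_d = min_k (a/‖a‖)·y_k satisfies γ'_d ≥ (1−ε)·γ_d, i.e., the solution is ε-accurate; moreover ‖a‖/t_c < γ_d/(1−ε). -/

import Mathlib

open scoped InnerProductSpace

theorem pdm_convergence_accuracy
    {E : Type*} [NormedAddCommGroup E] [InnerProductSpace ℝ E]
    {m : ℕ} (hm : 0 < m) (y : Fin m → E) (a : E) (tc : ℕ) (γd ε : ℝ)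
    (htc : 0 < tc)
    (hε : 0 < ε) (hε1 : ε < 1)
    (hγ : γd > 0)
    (hach : ∃ u : E, ‖u‖ = 1 ∧ ∀ j, ⟪u, y j⟫_ℝ ≥ γd)
    (hmax : ∀ u' : E, ‖u'‖ = 1 → ∃ j, ⟪u', y j⟫_ℝ ≤ γd)
    (hconv : ∀ j, ⟪a, y j⟫_ℝ > (1 - ε) * ‖a‖ ^ 2 / tc)
    (hlow : ‖a‖ / tc ≥ γd) :
    ((1 - ε) * γd ≤
      Finset.univ.inf' (Finset.univ_nonempty_iff.mpr ⟨⟨0, hm⟩⟩)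
        (fun j => ⟪‖a‖⁻¹ • a, y j⟫_ℝ)) ∧
    ‖a‖ / tc < γd / (1 - ε) := by
  have htc' : (0:ℝ) < tc := by exact_mod_cast htc
  have ha : 0 < ‖a‖ := by
    by_contra h
    push_neg at h
    have : ‖a‖ = 0 := le_antisymm h (norm_nonneg a)
    rw [this] at hlow
    simp at hlow
    nlinarith [hlow]
  have hε' : 0 < 1 - ε := by linarith
  have key : ∀ j, (1 - ε) * ‖a‖ / tc < ⟪‖a‖⁻¹ • a, y j⟫_ℝ := by
    intro j
    have h := hconv j
    rw [real_inner_smul_left]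
    have h2 := mul_lt_mul_of_pos_left h (inv_pos.mpr ha)
    have h3 : ‖a‖⁻¹ * ((1 - ε) * ‖a‖ ^ 2 / tc) = (1 - ε) * ‖a‖ / tc := by
      field_simp
    linarith
  constructor
  · apply Finset.le_inf'
    intro j _
    have := key j
    have h2 : (1 - ε) * γd ≤ (1 - ε) * ‖a‖ / tc := by
      rw [mul_div_assoc]
      exact mul_le_mul_of_nonneg_left hlow hε'.le
    linarith
  · have hu : ‖‖a‖⁻¹ • a‖ = 1 := by
      rw [norm_smul, norm_inv, norm_norm, inv_mul_cancel₀ ha.ne']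
    obtain ⟨j, hj⟩ := hmax _ hu
    have := key j
    rw [lt_div_iff₀ hε']
    calc ‖a‖ / ↑tc * (1 - ε) = (1 - ε) * ‖a‖ / tc := by ring
      _ < ⟪‖a‖⁻¹ • a, y j⟫_ℝ := key j
      _ ≤ γd := hj
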